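/- Let g be a 3-BiHom-Lie superalgebra that is nilpotent. Then the T_θ-extension g ⊕ g* is nilpotent. -/

import Mathlib

structure Is3BiHomLieSuper (𝕜 : Type*) [Field 𝕜] {V : Type*} [AddCommGroup V] [Module 𝕜 V]
    (G : ZMod 2 → Submodule 𝕜 V) (br : V → V → V → V) (α β : V →ₗ[𝕜] V) : Prop where
  sup_top : G 0 ⊔ G 1 = ⊤
  inf_bot : G 0 ⊓ G 1 = ⊥
  add₁ : ∀ x x' y z : V, br (x + x') y z = br x y z + br x' y z
  smul₁ : ∀ (c : 𝕜) (x y z : V), br (c • x) y z = c • br x y z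
  add₂ : ∀ x y y' z : V, br x (y + y') z = br x y z + br x y' z
  smul₂ : ∀ (c : 𝕜) (x y z : V), br x (c • y) z = c • br x y z
  add₃ : ∀ x y z z' : V, br x y (z + z') = br x y z + br x y z'
  smul₃ : ∀ (c : 𝕜) (x y z : V), br x y (c • z) = c • br x y z
  α_even : ∀ i, ∀ x ∈ G i, α x ∈ G i
  β_even : ∀ i, ∀ x ∈ G i, β x ∈ G i
  br_grade : ∀ i j k, ∀ x ∈ G i, ∀ y ∈ G j, ∀ z ∈ G k, br x y z ∈ G (i + j + k)
  comm : ∀ x, α (β x) = β (α x)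
  mult_α : ∀ x y z, α (br x y z) = br (α x) (α y) (α z)
  mult_β : ∀ x y z, β (br x y z) = br (β x) (β y) (β z)
  skew₁ : ∀ (i j : ZMod 2), ∀ x ∈ G i, ∀ y ∈ G j, ∀ z : V,
    br (β x) (β y) (α z) = -((-1 : 𝕜) ^ (i.val * j.val)) • br (β y) (β x) (α z)
  skew₂ : ∀ (j k : ZMod 2), ∀ y ∈ G j, ∀ z ∈ G k, ∀ x : V,
    br (β x) (β y) (α z) = -((-1 : 𝕜) ^ (j.val * k.val)) • br (β x) (β z) (α y)
  jacobi : ∀ (ix iy iz iu iv : ZMod 2), ∀ x ∈ G ix, ∀ y ∈ G iy, ∀ z ∈ G iz, ∀ u ∈ G iu, ∀ v ∈ G iv,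
    br (β (β x)) (β (β y)) (br (β z) (β u) (α v)) =
      (-1 : 𝕜) ^ ((iu.val + iv.val) * (ix.val + iy.val + iz.val)) •
        br (β (β u)) (β (β v)) (br (β x) (β y) (α z)) -
      (-1 : 𝕜) ^ ((iz.val + iv.val) * (ix.val + iy.val) + iu.val * iv.val) •
        br (β (β z)) (β (β v)) (br (β x) (β y) (α u)) +
      (-1 : 𝕜) ^ ((iz.val + iu.val) * (ix.val + iy.val)) •
        br (β (β z)) (β (β u)) (br (β x) (β y) (α v))

structure Is3Cocycle (𝕜 : Type*) [Field 𝕜] {V M : Type*} [AddCommGroup V] [Module 𝕜 V]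
    [AddCommGroup M] [Module 𝕜 M]
    (G : ZMod 2 → Submodule 𝕜 V) (br : V → V → V → V) (α β : V →ₗ[𝕜] V)
    (GM : ZMod 2 → Submodule 𝕜 M) (ρ : V → V → M →ₗ[𝕜] M) (αM βM : M →ₗ[𝕜] M)
    (θ : V → V → V → M) : Prop where
  θadd₁ : ∀ x x' y z : V, θ (x + x') y z = θ x y z + θ x' y z
  θsmul₁ : ∀ (c : 𝕜) (x y z : V), θ (c • x) y z = c • θ x y z
  θadd₂ : ∀ x y y' z : V, θ x (y + y') z = θ x y z + θ x y' z
  θsmul₂ : ∀ (c : 𝕜) (x y z : V), θ x (c • y) z = c • θ x y z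
  θadd₃ : ∀ x y z z' : V, θ x y (z + z') = θ x y z + θ x y z'
  θsmul₃ : ∀ (c : 𝕜) (x y z : V), θ x y (c • z) = c • θ x y z
  θeven : ∀ (i j k : ZMod 2), ∀ x ∈ G i, ∀ y ∈ G j, ∀ z ∈ G k, θ x y z ∈ GM (i + j + k)
  equiv_α : ∀ x y z, αM (θ x y z) = θ (α x) (α y) (α z)
  equiv_β : ∀ x y z, βM (θ x y z) = θ (β x) (β y) (β z)
  cskew₁ : ∀ (i j : ZMod 2), ∀ x ∈ G i, ∀ y ∈ G j, ∀ z : V,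
    θ (β x) (β y) (α z) = -((-1 : 𝕜) ^ (i.val * j.val)) • θ (β y) (β x) (α z)
  cskew₂ : ∀ (j k : ZMod 2), ∀ y ∈ G j, ∀ z ∈ G k, ∀ x : V,
    θ (β x) (β y) (α z) = -((-1 : 𝕜) ^ (j.val * k.val)) • θ (β x) (β z) (α y)
  cocycle : ∀ (i1 i2 i3 i4 i5 : ZMod 2), ∀ x1 ∈ G i1, ∀ x2 ∈ G i2, ∀ x3 ∈ G i3,
      ∀ x4 ∈ G i4, ∀ x5 ∈ G i5,
    θ (β (β x1)) (β (β x2)) (br (β x3) (β x4) (α x5)) +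
      ρ (β (β x1)) (β (β x2)) (θ (β x3) (β x4) (α x5)) =
    (-1 : 𝕜) ^ ((i4.val + i5.val) * (i1.val + i2.val + i3.val)) •
      (θ (β (β x4)) (β (β x5)) (br (β x1) (β x2) (α x3)) +
        ρ (β (β x4)) (β (β x5)) (θ (β x1) (β x2) (α x3))) -
    (-1 : 𝕜) ^ ((i3.val + i5.val) * (i1.val + i2.val) + i4.val * i5.val) •
      (θ (β (β x3)) (β (β x5)) (br (β x1) (β x2) (α x4)) +
        ρ (β (β x3)) (β (β x5)) (θ (β x1) (β x2) (α x4))) +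
    (-1 : 𝕜) ^ ((i3.val + i4.val) * (i1.val + i2.val)) •
      (θ (β (β x3)) (β (β x4)) (br (β x1) (β x2) (α x5)) +
        ρ (β (β x3)) (β (β x4)) (θ (β x1) (β x2) (α x5)))

/-- The span of all brackets `br x y z` with `x ∈ P`, `y ∈ Q`, `z ∈ R`. -/
def tripleSpan (𝕜 : Type*) [Field 𝕜] {V : Type*} [AddCommGroup V] [Module 𝕜 V]
    (br : V → V → V → V) (P Q R : Submodule 𝕜 V) : Submodule 𝕜 V :=
  Submodule.span 𝕜 {w : V | ∃ x ∈ P, ∃ y ∈ Q, ∃ z ∈ R, w = br x y z}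

/-- Derived series: `g^{(0)} = g`, `g^{(n+1)} = [g^{(n)}, g^{(n)}, g]`. -/
def derivedSeries3 (𝕜 : Type*) [Field 𝕜] {V : Type*} [AddCommGroup V] [Module 𝕜 V]
    (br : V → V → V → V) : ℕ → Submodule 𝕜 V
  | 0 => ⊤
  | n + 1 => tripleSpan 𝕜 br (derivedSeries3 𝕜 br n) (derivedSeries3 𝕜 br n) ⊤

/-- Central descending series: `g^0 = g`, `g^{n+1} = [g^n, g, g]`. -/
def lowerSeries3 (𝕜 : Type*) [Field 𝕜] {V : Type*} [AddCommGroup V] [Module 𝕜 V]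
    (br : V → V → V → V) : ℕ → Submodule 𝕜 V
  | 0 => ⊤
  | n + 1 => tripleSpan 𝕜 br (lowerSeries3 𝕜 br n) ⊤ ⊤

/-- If the 3-BiHom-Lie superalgebra `g` is nilpotent, then its `T_θ`-extension `g ⊕ g*`
(with bracket built from the coadjoint representation `ad*` and a 3-cocycle `θ`) is nilpotent. -/
theorem statement15 {𝕜 V : Type*} [Field 𝕜] [AddCommGroup V] [Module 𝕜 V]
    (G : ZMod 2 → Submodule 𝕜 V) (br : V → V → V → V) (α β : V →ₗ[𝕜] V)
    (halg : Is3BiHomLieSuper 𝕜 G br α β)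
    (αi : V →ₗ[𝕜] V) (hαi₁ : ∀ x, α (αi x) = x) (hαi₂ : ∀ x, αi (α x) = x)
    (βi : V →ₗ[𝕜] V) (hβi₁ : ∀ x, β (βi x) = x) (hβi₂ : ∀ x, βi (β x) = x)
    -- the coadjoint representation on g*
    (ρ : V → V → Module.Dual 𝕜 V →ₗ[𝕜] Module.Dual 𝕜 V)
    (hρadd₁ : ∀ x x' y, ρ (x + x') y = ρ x y + ρ x' y)
    (hρsmul₁ : ∀ (c : 𝕜) x y, ρ (c • x) y = c • ρ x y)
    (hρadd₂ : ∀ x y y', ρ x (y + y') = ρ x y + ρ x y')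
    (hρsmul₂ : ∀ (c : 𝕜) x y, ρ x (c • y) = c • ρ x y)
    (hρ : ∀ (i j d : ZMod 2), ∀ x ∈ G i, ∀ y ∈ G j,
      ∀ h ∈ (G (d + 1)).dualAnnihilator, ∀ z : V,
      ρ x y h z = -((-1 : 𝕜) ^ (d.val * (i.val + j.val))) * h (br x y z))
    -- a 3-cocycle with values in g*
    (θ : V → V → V → Module.Dual 𝕜 V)
    (hcoc : Is3Cocycle 𝕜 G br α β (fun d => (G (d + 1)).dualAnnihilator) ρ
      α.dualMap β.dualMap θ)
    -- the T_θ-extension bracket on g ⊕ g*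
    (Br : V × Module.Dual 𝕜 V → V × Module.Dual 𝕜 V → V × Module.Dual 𝕜 V →
      V × Module.Dual 𝕜 V)
    (hadd₁ : ∀ p p' q r, Br (p + p') q r = Br p q r + Br p' q r)
    (hsmul₁ : ∀ (c : 𝕜) p q r, Br (c • p) q r = c • Br p q r)
    (hadd₂ : ∀ p q q' r, Br p (q + q') r = Br p q r + Br p q' r)
    (hsmul₂ : ∀ (c : 𝕜) p q r, Br p (c • q) r = c • Br p q r)
    (hadd₃ : ∀ p q r r', Br p q (r + r') = Br p q r + Br p q r')
    (hsmul₃ : ∀ (c : 𝕜) p q r, Br p q (c • r) = c • Br p q r)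
    (hBr : ∀ (i j k : ZMod 2) (u v w : V) (x y z : Module.Dual 𝕜 V),
      u ∈ G i → x ∈ (G (i + 1)).dualAnnihilator →
      v ∈ G j → y ∈ (G (j + 1)).dualAnnihilator →
      w ∈ G k → z ∈ (G (k + 1)).dualAnnihilator →
      Br (u, x) (v, y) (w, z) =
        (br u v w,
          θ u v w + ρ u v z -
            (-1 : 𝕜) ^ (j.val * k.val) • ρ u (αi (β w)) (α.dualMap (βi.dualMap y)) +
            (-1 : 𝕜) ^ (i.val * (j.val + k.val)) • ρ v (αi (β w)) (α.dualMap (βi.dualMap x))))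
    (hsolv : ∃ k, lowerSeries3 𝕜 br k = ⊥) :
    ∃ k, lowerSeries3 𝕜 Br k = ⊥ := by
  classical
  obtain ⟨K, hK⟩ := hsolv
  have hcases : ∀ d : ZMod 2, d = 0 ∨ d = 1 := by decide
  have hcompl : IsCompl (G 0) (G 1) :=
    ⟨disjoint_iff.mpr halg.inf_bot, codisjoint_iff.mpr halg.sup_top⟩
  -- the projections onto the even and odd parts
  set e0 : V →ₗ[𝕜] V := (G 0).subtype ∘ₗ (G 0).projectionOnto (G 1) hcompl with he0def
  set e1 : V →ₗ[𝕜] V := LinearMap.id - e0 with he1def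
  have he0mem : ∀ v, e0 v ∈ G 0 := fun v =>
    ((G 0).linearProjOfIsCompl (G 1) hcompl v).2
  have he0l : ∀ v ∈ G 0, e0 v = v := by
    intro v hv
    have := Submodule.projectionOnto_apply_left hcompl ⟨v, hv⟩
    simp only [he0def, LinearMap.comp_apply, Submodule.subtype_apply]
    rw [this]
  have he0r : ∀ v ∈ G 1, e0 v = 0 := by
    intro v hv
    have := Submodule.projectionOnto_apply_of_mem_right hcompl hv
    simp only [he0def, LinearMap.comp_apply, Submodule.subtype_apply]
    rw [this]; rfl
  have he1v : ∀ v, e1 v = v - e0 v := fun v => rfl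
  have he01 : ∀ v, e0 v + e1 v = v := by intro v; rw [he1v]; abel
  have he1mem : ∀ v, e1 v ∈ G 1 := by
    intro v
    have hv : v ∈ G 0 ⊔ G 1 := by rw [halg.sup_top]; trivial
    obtain ⟨a, ha, b, hb, rfl⟩ := Submodule.mem_sup.mp hv
    have : e0 (a + b) = a := by rw [map_add, he0l a ha, he0r b hb, add_zero]
    rw [he1v, this]
    simpa using hb
  have he1l : ∀ v ∈ G 0, e1 v = 0 := by
    intro v hv; rw [he1v, he0l v hv, sub_self]
  have he1r : ∀ v ∈ G 1, e1 v = v := by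
    intro v hv; rw [he1v, he0r v hv, sub_zero]
  -- zero lemmas
  have hbr0 : ∀ v w : V, br 0 v w = 0 := fun v w => by
    simpa using halg.smul₁ 0 0 v w
  have hθ0 : ∀ v w : V, θ 0 v w = 0 := fun v w => by
    simpa using hcoc.θsmul₁ 0 0 v w
  have hρ0 : ∀ v : V, ρ 0 v = 0 := fun v => by
    simpa using hρsmul₁ 0 0 v
  -- graded invariance of inverse maps
  have hinv_g : ∀ (T Ti : V →ₗ[𝕜] V), (∀ i, ∀ x ∈ G i, T x ∈ G i) →
      (∀ x, T (Ti x) = x) → (∀ x, Ti (T x) = x) →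
      ∀ (d : ZMod 2), ∀ v ∈ G d, Ti v ∈ G d := by
    intro T Ti hTg hT1 hT2 d v hv
    have hsum : T (e0 (Ti v)) + T (e1 (Ti v)) = v := by
      rw [← map_add, he01, hT1]
    have h0 : T (e0 (Ti v)) ∈ G 0 := hTg 0 _ (he0mem _)
    have h1 : T (e1 (Ti v)) ∈ G 1 := hTg 1 _ (he1mem _)
    rcases hcases d with rfl | rfl
    · have h1' : T (e1 (Ti v)) = v - T (e0 (Ti v)) := eq_sub_of_add_eq' hsum
      have hmem : T (e1 (Ti v)) ∈ G 0 ⊓ G 1 := ⟨h1' ▸ sub_mem hv h0, h1⟩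
      rw [halg.inf_bot] at hmem
      have hz : T (e1 (Ti v)) = 0 := hmem
      have hz' : e1 (Ti v) = 0 := by
        have := congrArg Ti hz; rwa [hT2, map_zero] at this
      have : Ti v = e0 (Ti v) := by
        conv_lhs => rw [← he01 (Ti v)]
        rw [hz', add_zero]
      rw [this]; exact he0mem _
    · have h0' : T (e0 (Ti v)) = v - T (e1 (Ti v)) := eq_sub_of_add_eq hsum
      have hmem : T (e0 (Ti v)) ∈ G 0 ⊓ G 1 := ⟨h0, h0' ▸ sub_mem hv h1⟩
      rw [halg.inf_bot] at hmem
      have hz : T (e0 (Ti v)) = 0 := hmem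
      have hz' : e0 (Ti v) = 0 := by
        have := congrArg Ti hz; rwa [hT2, map_zero] at this
      have : Ti v = e1 (Ti v) := by
        conv_lhs => rw [← he01 (Ti v)]
        rw [hz', zero_add]
      rw [this]; exact he1mem _
  have hαi_g : ∀ (d : ZMod 2), ∀ v ∈ G d, αi v ∈ G d :=
    hinv_g α αi halg.α_even hαi₁ hαi₂
  have hβi_g : ∀ (d : ZMod 2), ∀ v ∈ G d, βi v ∈ G d :=
    hinv_g β βi halg.β_even hβi₁ hβi₂
  -- inverse maps are bracket homomorphisms
  have hbrαi : ∀ x y z : V, αi (br x y z) = br (αi x) (αi y) (αi z) := by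
    intro x y z
    have h := halg.mult_α (αi x) (αi y) (αi z)
    rw [hαi₁, hαi₁, hαi₁] at h
    rw [← h, hαi₂]
  have hbrβi : ∀ x y z : V, βi (br x y z) = br (βi x) (βi y) (βi z) := by
    intro x y z
    have h := halg.mult_β (βi x) (βi y) (βi z)
    rw [hβi₁, hβi₁, hβi₁] at h
    rw [← h, hβi₂]
  -- invariance of the lower central series under bracket homomorphisms
  have hinvL : ∀ (T : V →ₗ[𝕜] V), (∀ x y z, T (br x y z) = br (T x) (T y) (T z)) →
      ∀ n, ∀ v ∈ lowerSeries3 𝕜 br n, T v ∈ lowerSeries3 𝕜 br n := by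
    intro T hT n
    induction n with
    | zero => intro v _; trivial
    | succ n ih =>
      have hle : lowerSeries3 𝕜 br (n + 1) ≤
          Submodule.comap T (lowerSeries3 𝕜 br (n + 1)) := by
        rw [show lowerSeries3 𝕜 br (n + 1)
            = tripleSpan 𝕜 br (lowerSeries3 𝕜 br n) ⊤ ⊤ from rfl, tripleSpan]
        apply Submodule.span_le.mpr
        rintro w ⟨x, hx, y, -, z, -, rfl⟩
        simp only [SetLike.mem_coe, Submodule.mem_comap, hT]
        exact Submodule.subset_span ⟨T x, ih x hx, T y, trivial, T z, trivial, rfl⟩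
      exact fun v hv => Submodule.mem_comap.mp (hle hv)
  -- gradedness of the lower central series
  have hgr : ∀ n, ∀ v ∈ lowerSeries3 𝕜 br n, e0 v ∈ lowerSeries3 𝕜 br n := by
    intro n
    induction n with
    | zero => intro v _; trivial
    | succ n ih =>
      have hle : lowerSeries3 𝕜 br (n + 1) ≤
          Submodule.comap e0 (lowerSeries3 𝕜 br (n + 1)) := by
        rw [show lowerSeries3 𝕜 br (n + 1)
            = tripleSpan 𝕜 br (lowerSeries3 𝕜 br n) ⊤ ⊤ from rfl, tripleSpan]
        apply Submodule.span_le.mpr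
        rintro w ⟨x, hx, y, -, z, -, rfl⟩
        simp only [SetLike.mem_coe, Submodule.mem_comap]
        have hx0 : e0 x ∈ lowerSeries3 𝕜 br n := ih x hx
        have hx1 : e1 x ∈ lowerSeries3 𝕜 br n := by
          rw [he1v]; exact sub_mem hx hx0
        have hterm : ∀ (dx dy dz : ZMod 2) (a b c : V), a ∈ G dx →
            a ∈ lowerSeries3 𝕜 br n → b ∈ G dy → c ∈ G dz →
            e0 (br a b c) ∈ lowerSeries3 𝕜 br (n + 1) := by
          intro dx dy dz a b c ha haL hb hc
          have hm : br a b c ∈ lowerSeries3 𝕜 br (n + 1) :=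
            Submodule.subset_span ⟨a, haL, b, trivial, c, trivial, rfl⟩
          have hg : br a b c ∈ G (dx + dy + dz) := halg.br_grade _ _ _ a ha b hb c hc
          rcases hcases (dx + dy + dz) with h | h
          · rw [h] at hg; rw [he0l _ hg]; exact hm
          · rw [h] at hg; rw [he0r _ hg]; exact Submodule.zero_mem _
        rw [← he01 x, ← he01 y, ← he01 z]
        simp only [halg.add₁, halg.add₂, halg.add₃, map_add]
        repeat' apply add_mem
        all_goals first
          | exact hterm _ _ _ _ _ _ (he0mem _) hx0 (he0mem _) (he0mem _)
          | exact hterm _ _ _ _ _ _ (he0mem _) hx0 (he0mem _) (he1mem _)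
          | exact hterm _ _ _ _ _ _ (he0mem _) hx0 (he1mem _) (he0mem _)
          | exact hterm _ _ _ _ _ _ (he0mem _) hx0 (he1mem _) (he1mem _)
          | exact hterm _ _ _ _ _ _ (he1mem _) hx1 (he0mem _) (he0mem _)
          | exact hterm _ _ _ _ _ _ (he1mem _) hx1 (he0mem _) (he1mem _)
          | exact hterm _ _ _ _ _ _ (he1mem _) hx1 (he1mem _) (he0mem _)
          | exact hterm _ _ _ _ _ _ (he1mem _) hx1 (he1mem _) (he1mem _)
      exact fun v hv => Submodule.mem_comap.mp (hle hv)
  have he1gr : ∀ n, ∀ v ∈ lowerSeries3 𝕜 br n, e1 v ∈ lowerSeries3 𝕜 br n := by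
    intro n v hv; rw [he1v]; exact sub_mem hv (hgr n v hv)
  -- rotation lemma: bracketing with a lower-series element in the last slot
  have hrot : ∀ n (v w t : V), t ∈ lowerSeries3 𝕜 br n →
      br v w t ∈ lowerSeries3 𝕜 br (n + 1) := by
    intro n v w t ht
    have hrot1 : ∀ (d : ZMod 2) (s : V), s ∈ lowerSeries3 𝕜 br n → s ∈ G d →
        br v w s ∈ lowerSeries3 𝕜 br (n + 1) := by
      intro d s hsL hsG
      have hc : αi s ∈ lowerSeries3 𝕜 br n := hinvL αi hbrαi n s hsL
      have hcG : αi s ∈ G d := hαi_g d s hsG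
      have hswap : ∀ (e f : ZMod 2) (pe qf : V), pe ∈ G e → qf ∈ G f →
          br (β pe) (β qf) (α (αi s)) ∈ lowerSeries3 𝕜 br (n + 1) := by
        intro e f pe qf hpe hqf
        have h2 := halg.skew₂ f d qf hqf (αi s) hcG pe
        have h1 := halg.skew₁ e d pe hpe (αi s) hcG qf
        have base : br (β (αi s)) (β pe) (α qf) ∈ lowerSeries3 𝕜 br (n + 1) :=
          Submodule.subset_span ⟨β (αi s), hinvL β halg.mult_β n _ hc,
            β pe, trivial, α qf, trivial, rfl⟩
        rw [h2, h1]
        exact Submodule.smul_mem _ _ (Submodule.smul_mem _ _ base)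
      have hv' : v = β (e0 (βi v)) + β (e1 (βi v)) := by
        rw [← map_add, he01, hβi₁]
      have hw' : w = β (e0 (βi w)) + β (e1 (βi w)) := by
        rw [← map_add, he01, hβi₁]
      have hs' : s = α (αi s) := (hαi₁ s).symm
      rw [hv', hw', hs', halg.add₁, halg.add₂, halg.add₂]
      exact add_mem
        (add_mem (hswap 0 0 _ _ (he0mem _) (he0mem _)) (hswap 0 1 _ _ (he0mem _) (he1mem _)))
        (add_mem (hswap 1 0 _ _ (he1mem _) (he0mem _)) (hswap 1 1 _ _ (he1mem _) (he1mem _)))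
    have h0 : e0 t ∈ lowerSeries3 𝕜 br n := hgr n t ht
    have h1 : e1 t ∈ lowerSeries3 𝕜 br n := he1gr n t ht
    have heq : br v w t = br v w (e0 t) + br v w (e1 t) := by
      conv_lhs => rw [← he01 t]
      exact halg.add₃ _ _ _ _
    rw [heq]
    exact add_mem (hrot1 0 _ h0 (he0mem _)) (hrot1 1 _ h1 (he1mem _))
  -- annihilator facts for the pieces of a dual vector
  have hfann0 : ∀ x : Module.Dual 𝕜 V,
      x ∘ₗ e0 ∈ (G ((0 : ZMod 2) + 1)).dualAnnihilator := by
    intro x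
    have h01 : ((0 : ZMod 2) + 1) = 1 := by decide
    rw [h01, Submodule.mem_dualAnnihilator]
    intro t ht
    show x (e0 t) = 0
    rw [he0r t ht, map_zero]
  have hfann1 : ∀ x : Module.Dual 𝕜 V,
      x ∘ₗ e1 ∈ (G ((1 : ZMod 2) + 1)).dualAnnihilator := by
    intro x
    have h11 : ((1 : ZMod 2) + 1) = 0 := by decide
    rw [h11, Submodule.mem_dualAnnihilator]
    intro t ht
    show x (e1 t) = 0
    rw [he1l t ht, map_zero]
  -- decomposition of a pair into graded pieces
  have hxsplit : ∀ x : Module.Dual 𝕜 V, x = x ∘ₗ e0 + x ∘ₗ e1 := by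
    intro x; ext t
    show x t = x (e0 t) + x (e1 t)
    rw [← map_add, he01]
  have hpairdecomp : ∀ s : V × Module.Dual 𝕜 V,
      s = (e0 s.1, s.2 ∘ₗ e0) + (e1 s.1, s.2 ∘ₗ e1) := by
    intro s
    rw [Prod.mk_add_mk]
    exact Prod.ext_iff.mpr ⟨(he01 s.1).symm, hxsplit s.2⟩
  -- first-component formula for the extension bracket
  have hbasicfst : ∀ (i j k : ZMod 2) (u : V) (x : Module.Dual 𝕜 V) (v : V)
      (y : Module.Dual 𝕜 V) (w : V) (z : Module.Dual 𝕜 V),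
      u ∈ G i → x ∈ (G (i + 1)).dualAnnihilator →
      v ∈ G j → y ∈ (G (j + 1)).dualAnnihilator →
      w ∈ G k → z ∈ (G (k + 1)).dualAnnihilator →
      (Br (u, x) (v, y) (w, z)).1 = br u v w := by
    intro i j k u x v y w z hu hx hv hy hw hz
    rw [hBr i j k u v w x y z hu hx hv hy hw hz]
  have keyfst : ∀ p q r : V × Module.Dual 𝕜 V,
      (Br p q r).1 = br p.1 q.1 r.1 := by
    intro p q r
    rw [hpairdecomp p, hpairdecomp q, hpairdecomp r]
    simp only [hadd₁, hadd₂, hadd₃, Prod.fst_add, halg.add₁, halg.add₂, halg.add₃]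
    rw [hbasicfst 0 0 0 _ _ _ _ _ _ (he0mem p.1) (hfann0 p.2) (he0mem q.1) (hfann0 q.2)
        (he0mem r.1) (hfann0 r.2),
      hbasicfst 0 0 1 _ _ _ _ _ _ (he0mem p.1) (hfann0 p.2) (he0mem q.1) (hfann0 q.2)
        (he1mem r.1) (hfann1 r.2),
      hbasicfst 0 1 0 _ _ _ _ _ _ (he0mem p.1) (hfann0 p.2) (he1mem q.1) (hfann1 q.2)
        (he0mem r.1) (hfann0 r.2),
      hbasicfst 0 1 1 _ _ _ _ _ _ (he0mem p.1) (hfann0 p.2) (he1mem q.1) (hfann1 q.2)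
        (he1mem r.1) (hfann1 r.2),
      hbasicfst 1 0 0 _ _ _ _ _ _ (he1mem p.1) (hfann1 p.2) (he0mem q.1) (hfann0 q.2)
        (he0mem r.1) (hfann0 r.2),
      hbasicfst 1 0 1 _ _ _ _ _ _ (he1mem p.1) (hfann1 p.2) (he0mem q.1) (hfann0 q.2)
        (he1mem r.1) (hfann1 r.2),
      hbasicfst 1 1 0 _ _ _ _ _ _ (he1mem p.1) (hfann1 p.2) (he1mem q.1) (hfann1 q.2)
        (he0mem r.1) (hfann0 r.2),
      hbasicfst 1 1 1 _ _ _ _ _ _ (he1mem p.1) (hfann1 p.2) (he1mem q.1) (hfann1 q.2)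
        (he1mem r.1) (hfann1 r.2)]
  -- step A: the first component lies in the lower central series of g
  have hstepA : ∀ n, ∀ s ∈ lowerSeries3 𝕜 Br n, s.1 ∈ lowerSeries3 𝕜 br n := by
    intro n
    induction n with
    | zero => intro s _; trivial
    | succ n ih =>
      have hle : lowerSeries3 𝕜 Br (n + 1) ≤
          Submodule.comap (LinearMap.fst 𝕜 V (Module.Dual 𝕜 V)) (lowerSeries3 𝕜 br (n + 1)) := by
        rw [show lowerSeries3 𝕜 Br (n + 1)
            = tripleSpan 𝕜 Br (lowerSeries3 𝕜 Br n) ⊤ ⊤ from rfl, tripleSpan]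
        apply Submodule.span_le.mpr
        rintro s ⟨p, hp, q, -, r, -, rfl⟩
        simp only [SetLike.mem_coe, Submodule.mem_comap, LinearMap.fst_apply]
        rw [keyfst]
        exact Submodule.subset_span ⟨p.1, ih p hp, q.1, trivial, r.1, trivial, rfl⟩
      exact fun s hs => Submodule.mem_comap.mp (hle hs)
  -- the basic term computation for the dual component
  have hterm2 : ∀ (a b : ℕ),
      (∀ v w t : V, t ∈ lowerSeries3 𝕜 br b → br v w t ∈ lowerSeries3 𝕜 br a) →
      ∀ (d j k : ZMod 2) (f : Module.Dual 𝕜 V),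
      f ∈ (G (d + 1)).dualAnnihilator → (∀ t ∈ lowerSeries3 𝕜 br a, f t = 0) →
      ∀ v ∈ G j, ∀ y ∈ (G (j + 1)).dualAnnihilator,
      ∀ w ∈ G k, ∀ z ∈ (G (k + 1)).dualAnnihilator,
      (Br (0, f) (v, y) (w, z)).1 = 0 ∧
        ∀ t ∈ lowerSeries3 𝕜 br b, (Br (0, f) (v, y) (w, z)).2 t = 0 := by
    intro a b hab d j k f hfann hfvan v hv y hy w hw z hz
    have hb := hBr d j k 0 v w f y z (Submodule.zero_mem _) hfann hv hy hw hz
    have hw' : αi (β w) ∈ G k := hαi_g k _ (halg.β_even k w hw)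
    have hXann : α.dualMap (βi.dualMap f) ∈ (G (d + 1)).dualAnnihilator := by
      rw [Submodule.mem_dualAnnihilator]
      intro t ht
      show f (βi (α t)) = 0
      exact (Submodule.mem_dualAnnihilator f).mp hfann _ (hβi_g _ _ (halg.α_even _ _ ht))
    constructor
    · rw [hb]; exact hbr0 v w
    · intro t ht
      rw [hb]
      show (θ 0 v w + ρ 0 v z -
          (-1 : 𝕜) ^ (j.val * k.val) • ρ 0 (αi (β w)) (α.dualMap (βi.dualMap y)) +
          (-1 : 𝕜) ^ (d.val * (j.val + k.val)) •
            ρ v (αi (β w)) (α.dualMap (βi.dualMap f))) t = 0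
      rw [hθ0, hρ0, hρ0]
      simp only [LinearMap.add_apply, LinearMap.sub_apply, LinearMap.smul_apply,
        LinearMap.zero_apply, smul_eq_mul, mul_zero, zero_add, sub_zero, add_zero, zero_sub,
        neg_zero]
      rw [hρ j k d v hv (αi (β w)) hw' (α.dualMap (βi.dualMap f)) hXann t]
      have hmem : βi (α (br v (αi (β w)) t)) ∈ lowerSeries3 𝕜 br a :=
        hinvL βi hbrβi a _ (hinvL α halg.mult_α a _ (hab _ _ _ ht))
      have : (α.dualMap (βi.dualMap f)) (br v (αi (β w)) t) = 0 := by
        show f (βi (α (br v (αi (β w)) t))) = 0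
        exact hfvan _ hmem
      rw [this, mul_zero, mul_zero]
      simp
  -- the key lemma: brackets with first argument purely dual
  have hkey : ∀ (a b : ℕ),
      (∀ v w t : V, t ∈ lowerSeries3 𝕜 br b → br v w t ∈ lowerSeries3 𝕜 br a) →
      ∀ (x : Module.Dual 𝕜 V), (∀ t ∈ lowerSeries3 𝕜 br a, x t = 0) →
      ∀ q r : V × Module.Dual 𝕜 V,
      (Br ((0 : V), x) q r).1 = 0 ∧
        ∀ t ∈ lowerSeries3 𝕜 br b, (Br ((0 : V), x) q r).2 t = 0 := by
    intro a b hab x hx q r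
    have hx0van : ∀ t ∈ lowerSeries3 𝕜 br a, (x ∘ₗ e0) t = 0 := by
      intro t ht; show x (e0 t) = 0; exact hx _ (hgr a t ht)
    have hx1van : ∀ t ∈ lowerSeries3 𝕜 br a, (x ∘ₗ e1) t = 0 := by
      intro t ht; show x (e1 t) = 0; exact hx _ (he1gr a t ht)
    have hx' : ((0 : V), x) = ((0 : V), x ∘ₗ e0) + ((0 : V), x ∘ₗ e1) := by
      rw [Prod.mk_add_mk, add_zero]
      exact congrArg _ (hxsplit x)
    have H1 := hterm2 a b hab 0 0 0 (x ∘ₗ e0) (hfann0 x) hx0van (e0 q.1) (he0mem _)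
      (q.2 ∘ₗ e0) (hfann0 q.2) (e0 r.1) (he0mem _) (r.2 ∘ₗ e0) (hfann0 r.2)
    have H2 := hterm2 a b hab 0 0 1 (x ∘ₗ e0) (hfann0 x) hx0van (e0 q.1) (he0mem _)
      (q.2 ∘ₗ e0) (hfann0 q.2) (e1 r.1) (he1mem _) (r.2 ∘ₗ e1) (hfann1 r.2)
    have H3 := hterm2 a b hab 0 1 0 (x ∘ₗ e0) (hfann0 x) hx0van (e1 q.1) (he1mem _)
      (q.2 ∘ₗ e1) (hfann1 q.2) (e0 r.1) (he0mem _) (r.2 ∘ₗ e0) (hfann0 r.2)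
    have H4 := hterm2 a b hab 0 1 1 (x ∘ₗ e0) (hfann0 x) hx0van (e1 q.1) (he1mem _)
      (q.2 ∘ₗ e1) (hfann1 q.2) (e1 r.1) (he1mem _) (r.2 ∘ₗ e1) (hfann1 r.2)
    have H5 := hterm2 a b hab 1 0 0 (x ∘ₗ e1) (hfann1 x) hx1van (e0 q.1) (he0mem _)
      (q.2 ∘ₗ e0) (hfann0 q.2) (e0 r.1) (he0mem _) (r.2 ∘ₗ e0) (hfann0 r.2)
    have H6 := hterm2 a b hab 1 0 1 (x ∘ₗ e1) (hfann1 x) hx1van (e0 q.1) (he0mem _)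
      (q.2 ∘ₗ e0) (hfann0 q.2) (e1 r.1) (he1mem _) (r.2 ∘ₗ e1) (hfann1 r.2)
    have H7 := hterm2 a b hab 1 1 0 (x ∘ₗ e1) (hfann1 x) hx1van (e1 q.1) (he1mem _)
      (q.2 ∘ₗ e1) (hfann1 q.2) (e0 r.1) (he0mem _) (r.2 ∘ₗ e0) (hfann0 r.2)
    have H8 := hterm2 a b hab 1 1 1 (x ∘ₗ e1) (hfann1 x) hx1van (e1 q.1) (he1mem _)
      (q.2 ∘ₗ e1) (hfann1 q.2) (e1 r.1) (he1mem _) (r.2 ∘ₗ e1) (hfann1 r.2)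
    constructor
    · rw [hx', hpairdecomp q, hpairdecomp r]
      simp only [hadd₁, hadd₂, hadd₃, Prod.fst_add]
      rw [H1.1, H2.1, H3.1, H4.1, H5.1, H6.1, H7.1, H8.1]
      simp
    · intro t ht
      rw [hx', hpairdecomp q, hpairdecomp r]
      simp only [hadd₁, hadd₂, hadd₃, Prod.snd_add, LinearMap.add_apply]
      rw [H1.2 t ht, H2.2 t ht, H3.2 t ht, H4.2 t ht, H5.2 t ht, H6.2 t ht,
        H7.2 t ht, H8.2 t ht]
      simp
  -- step B: after K steps, the whole extension series dies off
  have hstepB : ∀ m, m ≤ K → ∀ s ∈ lowerSeries3 𝕜 Br (K + m),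
      s.1 = 0 ∧ ∀ t ∈ lowerSeries3 𝕜 br (K - m), s.2 t = 0 := by
    intro m
    induction m with
    | zero =>
      intro _ s hs
      constructor
      · have := hstepA K s hs
        rw [hK] at this
        exact (Submodule.mem_bot _).mp this
      · intro t ht
        rw [Nat.sub_zero, hK] at ht
        rw [(Submodule.mem_bot _).mp ht, map_zero]
    | succ m ih =>
      intro hm1 s hs
      have hmK : m ≤ K := Nat.le_of_succ_le hm1
      have hab : ∀ v w t : V, t ∈ lowerSeries3 𝕜 br (K - (m + 1)) →
          br v w t ∈ lowerSeries3 𝕜 br (K - m) := by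
        intro v w t ht
        have := hrot (K - (m + 1)) v w t ht
        have harith : K - (m + 1) + 1 = K - m := by omega
        rwa [harith] at this
      set Tsub : Submodule 𝕜 (V × Module.Dual 𝕜 V) :=
        LinearMap.ker (LinearMap.fst 𝕜 V (Module.Dual 𝕜 V)) ⊓
          Submodule.comap (LinearMap.snd 𝕜 V (Module.Dual 𝕜 V))
            ((lowerSeries3 𝕜 br (K - (m + 1))).dualAnnihilator) with hTsub
      have hmemT : ∀ s : V × Module.Dual 𝕜 V, s ∈ Tsub ↔
          s.1 = 0 ∧ ∀ t ∈ lowerSeries3 𝕜 br (K - (m + 1)), s.2 t = 0 := by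
        intro s
        rw [hTsub]
        simp [Submodule.mem_inf, LinearMap.mem_ker, Submodule.mem_comap,
          Submodule.mem_dualAnnihilator]
      have hle : lowerSeries3 𝕜 Br (K + (m + 1)) ≤ Tsub := by
        rw [show lowerSeries3 𝕜 Br (K + (m + 1))
            = tripleSpan 𝕜 Br (lowerSeries3 𝕜 Br (K + m)) ⊤ ⊤ from rfl, tripleSpan]
        apply Submodule.span_le.mpr
        rintro s ⟨p, hp, q, -, r, -, rfl⟩
        obtain ⟨hp1, hp2⟩ := ih hmK p hp
        have hp' : p = ((0 : V), p.2) := Prod.ext_iff.mpr ⟨hp1, rfl⟩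
        rw [SetLike.mem_coe, hmemT, hp']
        exact hkey (K - m) (K - (m + 1)) hab p.2 hp2 q r
      exact (hmemT s).mp (hle hs)
  -- conclusion
  refine ⟨K + K, ?_⟩
  rw [eq_bot_iff]
  intro s hs
  obtain ⟨h1, h2⟩ := hstepB K le_rfl s hs
  have h2' : s.2 = 0 := by
    ext t
    exact h2 t (by rw [Nat.sub_self]; trivial)
  rw [Submodule.mem_bot]
  exact Prod.ext_iff.mpr ⟨h1, h2'⟩
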